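/- (Fiducial focusing implies global norm-one localization.) Let H be a complex Hilbert space and E a map assigning to each subset B of EuclideanSpace ℝ (Fin 3) a continuous linear operator E B : H →L[ℂ] H such that: (i) 0 ≤ E B ≤ 1 for every B (in the operator order); (ii) E is monotone: B ⊆ B' implies E B ≤ E B'; (iii) there is a family U of unitary operators on H indexed by a ∈ EuclideanSpace ℝ (Fin 3) with U a * E B * (U a)⋆ = E ((fun x => x + a) '' B) for all a and B; (iv) fiducial focusing holds: for every r > 0 and every ε > 0 there exists ψ ∈ H with ‖ψ‖ = 1 and Re⟪ψ, E (Metric.ball 0 r) ψ⟫ ≥ 1 - ε. Then for every nonempty open set O ⊆ EuclideanSpace ℝ (Fin 3), ‖E O‖ = 1. -/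

import Mathlib

open scoped InnerProductSpace

/-- Fiducial focusing implies global norm-one localization: a translation-covariant
effect-valued set function on ℝ³ which admits arbitrarily well localized states around
the origin has norm-one effects on every nonempty open set. -/
theorem stmt_2
    {H : Type*} [NormedAddCommGroup H] [InnerProductSpace ℂ H] [CompleteSpace H]
    (E : Set (EuclideanSpace ℝ (Fin 3)) → (H →L[ℂ] H))
    (hpos : ∀ B, 0 ≤ E B ∧ E B ≤ 1)
    (hmono : ∀ B B', B ⊆ B' → E B ≤ E B')
    (U : EuclideanSpace ℝ (Fin 3) → (H →L[ℂ] H))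
    (hunitary : ∀ a, star (U a) * U a = 1 ∧ U a * star (U a) = 1)
    (hcov : ∀ a B, U a * E B * star (U a) = E ((fun x => x + a) '' B))
    (hfocus : ∀ r > (0 : ℝ), ∀ ε > (0 : ℝ), ∃ ψ : H, ‖ψ‖ = 1 ∧
      1 - ε ≤ (⟪ψ, E (Metric.ball 0 r) ψ⟫_ℂ).re) :
    ∀ O : Set (EuclideanSpace ℝ (Fin 3)), IsOpen O → O.Nonempty → ‖E O‖ = 1 := by
  intro O hO hOne
  obtain ⟨a, ha⟩ := hOne
  obtain ⟨r, hr, hball⟩ := Metric.isOpen_iff.mp hO a ha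
  -- translated ball
  have himg : (fun x => x + a) '' Metric.ball 0 r = Metric.ball a r := by
    ext x
    simp only [Set.mem_image, Metric.mem_ball, dist_eq_norm, sub_zero]
    constructor
    · rintro ⟨y, hy, rfl⟩; simpa using hy
    · intro hx; exact ⟨x - a, by simpa using hx, by abel⟩
  -- nontrivial H
  obtain ⟨ψ₀, hψ₀, _⟩ := hfocus 1 one_pos 1 one_pos
  have : Nontrivial H := ⟨ψ₀, 0, by intro h; rw [h] at hψ₀; simp at hψ₀⟩
  -- upper bound
  have hub : ‖E O‖ ≤ 1 := by
    have := CStarAlgebra.norm_le_norm_of_nonneg_of_le (hpos O).1 (hpos O).2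
    simpa [norm_one] using this
  -- lower bound: for all ε > 0, 1 - ε ≤ ‖E O‖
  have hlb : ∀ ε > (0 : ℝ), 1 - ε ≤ ‖E O‖ := by
    intro ε hε
    obtain ⟨ψ, hψ, hψE⟩ := hfocus r hr ε hε
    set φ := U a ψ with hφ
    have hUadj : (U a).adjoint = star (U a) := rfl
    have hφnorm : ‖φ‖ = 1 := by
      have : ⟪φ, φ⟫_ℂ = ⟪ψ, ψ⟫_ℂ := by
        rw [hφ, ← ContinuousLinearMap.adjoint_inner_right]
        have : (U a).adjoint (U a ψ) = ψ := by
          have h1 := (hunitary a).1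
          calc (U a).adjoint (U a ψ) = ((U a).adjoint * U a) ψ := rfl
            _ = ψ := by rw [hUadj, h1]; rfl
        rw [this]
      have h4 : RCLike.re ⟪φ, φ⟫_ℂ = ‖φ‖ ^ 2 := inner_self_eq_norm_sq φ
      have h5 : RCLike.re ⟪ψ, ψ⟫_ℂ = ‖ψ‖ ^ 2 := inner_self_eq_norm_sq ψ
      have h6 := congrArg RCLike.re this
      rw [h4, h5, hψ] at h6
      nlinarith [norm_nonneg φ]
    have hinner : ⟪φ, E (Metric.ball a r) φ⟫_ℂ = ⟪ψ, E (Metric.ball 0 r) ψ⟫_ℂ := by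
      rw [← himg, ← hcov a]
      have hexp : (U a * E (Metric.ball 0 r) * star (U a)) φ
          = U a (E (Metric.ball 0 r) ((star (U a)) (U a ψ))) := rfl
      have hsU : (star (U a)) (U a ψ) = ψ := by
        have h1 := (hunitary a).1
        calc (star (U a)) (U a ψ) = (star (U a) * U a) ψ := rfl
          _ = ψ := by rw [h1]; rfl
      rw [hexp, hsU, hφ, ← ContinuousLinearMap.adjoint_inner_right, hUadj]
      congr 1
      calc (star (U a)) (U a (E (Metric.ball 0 r) ψ))
          = (star (U a) * U a) (E (Metric.ball 0 r) ψ) := rfl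
        _ = E (Metric.ball 0 r) ψ := by rw [(hunitary a).1]; rfl
    have hle : E (Metric.ball a r) ≤ E O := hmono _ _ hball
    have hpos' : (E O - E (Metric.ball a r)).IsPositive :=
      (ContinuousLinearMap.le_def _ _).mp hle
    have hre : (⟪φ, E (Metric.ball a r) φ⟫_ℂ).re ≤ (⟪φ, E O φ⟫_ℂ).re := by
      have := hpos'.inner_nonneg_right φ
      rw [ContinuousLinearMap.sub_apply, inner_sub_right] at this
      have h := (RCLike.nonneg_iff.mp this).1
      simp only [RCLike.re_to_complex, map_sub, Complex.sub_re] at h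
      linarith
    have hnorm : (⟪φ, E O φ⟫_ℂ).re ≤ ‖E O‖ := by
      have h1 : (⟪φ, E O φ⟫_ℂ).re ≤ ‖⟪φ, E O φ⟫_ℂ‖ := Complex.re_le_norm _
      have h2 : ‖⟪φ, E O φ⟫_ℂ‖ ≤ ‖φ‖ * ‖E O φ‖ := norm_inner_le_norm _ _
      have h3 : ‖E O φ‖ ≤ ‖E O‖ * ‖φ‖ := (E O).le_opNorm φ
      rw [hφnorm, one_mul] at h2
      rw [hφnorm, mul_one] at h3
      linarith
    rw [hinner] at hre
    linarith
  -- conclude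
  refine le_antisymm hub ?_
  by_contra h
  push_neg at h
  have := hlb ((1 - ‖E O‖)/2) (by linarith)
  linarith
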